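/- Let m ≥ 1, let (s̃_k)_{k≥0} and (ỹ_k)_{k≥0} be sequences in ℝⁿ, let S_k = [s̃_0, …, s̃_{k−1}], let L_{m−1} ∈ ℝ^{m×m} be symmetric positive definite, and define L_k for k ≥ m by L_k = [I_k; −ỹ_kᵀS_k] · L_{k−1} · [I_k, −S_kᵀỹ_k] + E_{k+1}. Let H_m = S_m L_{m−1} S_mᵀ and let H_{k+1} be the BFGS update of H_k by (s̃_k, ỹ_k) for k ≥ m. If for every k ≥ m the vector s̃_k lies in the range of H_k, then rank(H_k) = rank(H_m) = rank(S_m) for all k ≥ m; in particular rank(H_k) = m for all k ≥ m if and only if rank(H_m) = m. -/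

import Mathlib

open Matrix

/-- The BFGS update of `H` by the pair `(s, y)`:
`(I - s yᵀ) H (I - y sᵀ) + s sᵀ`. -/
def bfgsUpdate {ι : Type*} [Fintype ι] [DecidableEq ι]
    (H : Matrix ι ι ℝ) (s y : ι → ℝ) : Matrix ι ι ℝ :=
  (1 - Matrix.vecMulVec s y) * H * (1 - Matrix.vecMulVec y s) + Matrix.vecMulVec s s

/-- The `(k+1) × k` matrix `[I_k; -wᵀ]`: the identity `I_k` stacked on top of the row `-wᵀ`. -/
def stackId {k : ℕ} (w : Fin k → ℝ) : Matrix (Fin (k + 1)) (Fin k) ℝ :=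
  Matrix.of fun i j => if h : (i : ℕ) < k then (if (⟨i, h⟩ : Fin k) = j then 1 else 0) else -w j

/-- The `k × k` matrix whose last diagonal entry is `1` and all other entries are `0`. -/
def Emat (k : ℕ) : Matrix (Fin k) (Fin k) ℝ :=
  Matrix.of fun i j => if (i : ℕ) = k - 1 ∧ (j : ℕ) = k - 1 then 1 else 0

/-- `S_k = [s̃_0, …, s̃_{k-1}]`, the `n × k` matrix whose columns are `s̃_0, …, s̃_{k-1}`. -/
def Smat {n : ℕ} (s : ℕ → Fin n → ℝ) (k : ℕ) : Matrix (Fin n) (Fin k) ℝ :=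
  Matrix.of fun i j => s j i

/-- With `L_{m-1}` symmetric positive definite, `L_k` given by the recursion
`L_k = [I_k; -ỹ_kᵀ S_k] · L_{k-1} · [I_k, -S_kᵀ ỹ_k] + E_{k+1}`, `H_m = S_m L_{m-1} S_mᵀ`,
and `H_{k+1}` the BFGS update of `H_k` by `(s̃_k, ỹ_k)`: if every `s̃_k` (`k ≥ m`) lies in
the range of `H_k`, then `rank(H_k) = rank(H_m) = rank(S_m)` for all `k ≥ m`; in particular
`rank(H_k) = m` for all `k ≥ m` iff `rank(H_m) = m`.
Here `L : (k : ℕ) → Matrix (Fin k) (Fin k) ℝ` is indexed by size, i.e. `L k` denotes the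
`k × k` matrix `L_{k-1}` of the paper. -/
lemma aux_vecMulVec_transpose {p q : ℕ} (a : Fin p → ℝ) (b : Fin q → ℝ) :
    (vecMulVec a b)ᵀ = vecMulVec b a := by
  ext i j; simp [vecMulVec, mul_comm]

open scoped MatrixOrder in
lemma aux_rank_SLS {p q : ℕ} (S : Matrix (Fin p) (Fin q) ℝ)
    {L : Matrix (Fin q) (Fin q) ℝ} (hL : L.PosDef) :
    (S * L * Sᵀ).rank = S.rank := by
  set C := CFC.sqrt L with hCdef
  have hCC : C * C = L := CFC.sqrt_mul_sqrt_self L (nonneg_iff_posSemidef.mpr hL.posSemidef)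
  have hCH : Cᵀ = C := by
    have h := (nonneg_iff_posSemidef.mp (CFC.sqrt_nonneg L)).1
    rwa [Matrix.IsHermitian, conjTranspose_eq_transpose_of_trivial] at h
  have hdet : IsUnit C.det := by
    have h2 : C.det * C.det = L.det := by rw [← det_mul, hCC]
    have hne : C.det ≠ 0 := by
      intro h; rw [h, mul_zero] at h2; exact hL.det_pos.ne' h2.symm
    exact hne.isUnit
  have hdecomp : S * L * Sᵀ = (S * C) * (S * C)ᵀ := by
    rw [transpose_mul, hCH, ← hCC]
    simp only [Matrix.mul_assoc]
  rw [hdecomp, rank_self_mul_transpose, rank_mul_eq_left_of_isUnit_det C S hdet]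

lemma aux_smat_mul_stackId {n k : ℕ} (s y : ℕ → Fin n → ℝ) :
    Smat s (k + 1) * stackId (Matrix.vecMul (y k) (Smat s k)) =
      (1 - vecMulVec (s k) (y k)) * Smat s k := by
  ext i j
  rw [Matrix.mul_apply, Fin.sum_univ_castSucc]
  simp [Smat, stackId, vecMulVec, Matrix.sub_apply, Matrix.mul_apply, Matrix.one_apply,
    vecMul, dotProduct, sub_mul, Finset.sum_sub_distrib, Finset.mul_sum, mul_comm,
    mul_left_comm, sub_eq_add_neg, mul_add, Finset.sum_add_distrib, mul_ite, mul_one, mul_zero]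

lemma aux_smat_emat {n k : ℕ} (s : ℕ → Fin n → ℝ) :
    Smat s (k + 1) * Emat (k + 1) * (Smat s (k + 1))ᵀ = vecMulVec (s k) (s k) := by
  ext i j
  rw [Matrix.mul_apply]
  have key : ∀ l : Fin (k+1), (Smat s (k+1) * Emat (k+1)) i l * (Smat s (k+1))ᵀ l j
      = (if (l : ℕ) = k then s k i * s k j else 0) := by
    intro l
    rw [Matrix.mul_apply, Fin.sum_univ_castSucc]
    rw [Finset.sum_eq_zero (fun x _ => by
      have hx := x.isLt
      have hcond : ¬(((Fin.castSucc x : Fin (k+1)) : ℕ) = (k+1) - 1 ∧ (l : ℕ) = (k+1) - 1) := by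
        simp only [Fin.coe_castSucc]; omega
      simp only [Smat, Emat, Matrix.of_apply]
      rw [if_neg hcond, mul_zero])]
    simp only [Smat, Emat, Matrix.of_apply, Matrix.transpose_apply, Fin.val_last]
    by_cases hl : (l : ℕ) = k
    · rw [if_pos ⟨by omega, by omega⟩, if_pos hl, mul_one, zero_add, hl]
    · rw [if_neg (by omega), if_neg hl, mul_zero, zero_add, zero_mul]
  simp only [key]
  rw [Fin.sum_univ_castSucc]
  rw [Finset.sum_eq_zero (fun x _ => by
    have hx := x.isLt
    have : ¬(((Fin.castSucc x : Fin (k+1)) : ℕ) = k) := by simp only [Fin.coe_castSucc]; omega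
    rw [if_neg this])]
  simp [vecMulVec]

lemma aux_stackId_transpose_mulVec {k : ℕ} (w : Fin k → ℝ) (x : Fin (k+1) → ℝ) (j : Fin k) :
    ((stackId w)ᵀ *ᵥ x) j = x (Fin.castSucc j) - w j * x (Fin.last k) := by
  simp only [mulVec, dotProduct, Matrix.transpose_apply]
  rw [Fin.sum_univ_castSucc]
  have h1 : ∀ i : Fin k, stackId w (Fin.castSucc i) j * x (Fin.castSucc i)
      = (if i = j then x (Fin.castSucc i) else 0) := by
    intro i
    simp only [stackId, Matrix.of_apply, Fin.coe_castSucc]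
    rw [dif_pos i.isLt]
    simp only [Fin.eta]
    split <;> simp
  have h3 : stackId w (Fin.last k) j * x (Fin.last k) = -(w j * x (Fin.last k)) := by
    simp only [stackId, Matrix.of_apply, Fin.val_last]
    rw [dif_neg (by omega)]
    ring
  rw [Finset.sum_congr rfl fun i _ => h1 i, h3,
    Finset.sum_ite_eq' Finset.univ j, if_pos (Finset.mem_univ j)]
  ring

lemma aux_emat_quad {k : ℕ} (x : Fin (k+1) → ℝ) :
    x ⬝ᵥ (Emat (k+1) *ᵥ x) = x (Fin.last k) * x (Fin.last k) := by
  simp only [dotProduct, mulVec, Emat, Matrix.of_apply]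
  rw [Fin.sum_univ_castSucc]
  rw [Finset.sum_eq_zero (fun i _ => by
    have hi := i.isLt
    rw [Finset.sum_eq_zero (fun l _ => by
      rw [if_neg (by simp only [Fin.coe_castSucc]; omega), zero_mul]), mul_zero])]
  rw [zero_add]
  rw [Fin.sum_univ_castSucc]
  rw [Finset.sum_eq_zero (fun l _ => by
    have hl := l.isLt
    rw [if_neg (by simp only [Fin.coe_castSucc]; omega), zero_mul])]
  simp [Fin.val_last, mul_comm]

lemma aux_emat_symm (k : ℕ) : (Emat k)ᵀ = Emat k := by
  ext i j; simp only [Matrix.transpose_apply, Emat, Matrix.of_apply, and_comm]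

lemma aux_posdef_step {k : ℕ} {L : Matrix (Fin k) (Fin k) ℝ} (hL : L.PosDef)
    (w : Fin k → ℝ) :
    (stackId w * L * (stackId w)ᵀ + Emat (k+1)).PosDef := by
  have hLsymm : Lᵀ = L := by
    have h := hL.1
    rwa [Matrix.IsHermitian, conjTranspose_eq_transpose_of_trivial] at h
  refine Matrix.PosDef.of_dotProduct_mulVec_pos ?_ ?_
  · rw [Matrix.IsHermitian, conjTranspose_eq_transpose_of_trivial, transpose_add,
      aux_emat_symm, transpose_mul, transpose_mul, transpose_transpose, hLsymm,
      Matrix.mul_assoc]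
  · intro x hx
    rw [star_trivial, add_mulVec, dotProduct_add, aux_emat_quad]
    have hquad : x ⬝ᵥ ((stackId w * L * (stackId w)ᵀ) *ᵥ x)
        = ((stackId w)ᵀ *ᵥ x) ⬝ᵥ (L *ᵥ ((stackId w)ᵀ *ᵥ x)) := by
      rw [← mulVec_mulVec, ← mulVec_mulVec, dotProduct_mulVec, ← mulVec_transpose]
    rw [hquad]
    by_cases hz : (stackId w)ᵀ *ᵥ x = 0
    · rw [hz]
      simp only [dotProduct_zero, mulVec_zero, zero_add]
      have hlast : x (Fin.last k) ≠ 0 := by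
        intro h0
        apply hx
        funext i
        refine Fin.lastCases h0 (fun j => ?_) i
        have := congrFun hz j
        rw [aux_stackId_transpose_mulVec, h0, mul_zero, sub_zero] at this
        simpa using this
      exact mul_self_pos.mpr hlast
    · have h1 : 0 < ((stackId w)ᵀ *ᵥ x) ⬝ᵥ (L *ᵥ ((stackId w)ᵀ *ᵥ x)) := by
        have := hL.dotProduct_mulVec_pos hz
        rwa [star_trivial] at this
      nlinarith [mul_self_nonneg (x (Fin.last k))]

lemma aux_smat_succ_mulVec {n k : ℕ} (s : ℕ → Fin n → ℝ) (v : Fin (k+1) → ℝ) :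
    Smat s (k+1) *ᵥ v = Smat s k *ᵥ (fun j => v (Fin.castSucc j)) + v (Fin.last k) • s k := by
  funext i
  simp only [mulVec, dotProduct, Pi.add_apply, Pi.smul_apply, smul_eq_mul, Smat, Matrix.of_apply]
  rw [Fin.sum_univ_castSucc]
  simp [Fin.val_last, mul_comm]

lemma aux_rank_smat_succ {n k : ℕ} (s : ℕ → Fin n → ℝ)
    (h : ∃ u, Smat s k *ᵥ u = s k) :
    (Smat s (k+1)).rank = (Smat s k).rank := by
  obtain ⟨u, hu⟩ := h
  have hrange : LinearMap.range (Smat s (k+1)).mulVecLin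
      = LinearMap.range (Smat s k).mulVecLin := by
    apply le_antisymm
    · rintro _ ⟨v, rfl⟩
      refine ⟨(fun j => v (Fin.castSucc j)) + v (Fin.last k) • u, ?_⟩
      rw [mulVecLin_apply, mulVecLin_apply, mulVec_add, mulVec_smul, hu,
        aux_smat_succ_mulVec]
    · rintro _ ⟨v, rfl⟩
      refine ⟨Fin.snoc v 0, ?_⟩
      rw [mulVecLin_apply, mulVecLin_apply, aux_smat_succ_mulVec]
      simp [Fin.snoc_castSucc, Fin.snoc_last]
  rw [Matrix.rank, Matrix.rank, hrange]

theorem stmt_6 (n m : ℕ) (hm : 1 ≤ m) (s y : ℕ → Fin n → ℝ)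
    (L : (k : ℕ) → Matrix (Fin k) (Fin k) ℝ)
    (H : ℕ → Matrix (Fin n) (Fin n) ℝ)
    (hLm : (L m).PosDef)
    (hL : ∀ k, m ≤ k →
      L (k + 1) =
        stackId (Matrix.vecMul (y k) (Smat s k)) * L k *
            (stackId (Matrix.vecMul (y k) (Smat s k)))ᵀ + Emat (k + 1))
    (hHm : H m = Smat s m * L m * (Smat s m)ᵀ)
    (hH : ∀ k, m ≤ k → H (k + 1) = bfgsUpdate (H k) (s k) (y k))
    (hrange : ∀ k, m ≤ k → ∃ x : Fin n → ℝ, (H k).mulVec x = s k) :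
    (∀ k, m ≤ k → (H k).rank = (H m).rank) ∧
      (H m).rank = (Smat s m).rank ∧
      ((∀ k, m ≤ k → (H k).rank = m) ↔ (H m).rank = m) := by
  have key : ∀ k, m ≤ k → (H k = Smat s k * L k * (Smat s k)ᵀ ∧ (L k).PosDef) := by
    intro k hk
    induction k, hk using Nat.le_induction with
    | base => exact ⟨hHm, hLm⟩
    | succ k hk ih =>
      refine ⟨?_, by rw [hL k hk]; exact aux_posdef_step ih.2 _⟩
      set W := stackId (Matrix.vecMul (y k) (Smat s k)) with hW
      have hAS : Smat s (k+1) * W = (1 - vecMulVec (s k) (y k)) * Smat s k :=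
        aux_smat_mul_stackId s y
      have htr : (1 : Matrix (Fin n) (Fin n) ℝ) - vecMulVec (y k) (s k)
          = ((1 : Matrix (Fin n) (Fin n) ℝ) - vecMulVec (s k) (y k))ᵀ := by
        rw [transpose_sub, transpose_one, aux_vecMulVec_transpose]
      have e1 : (1 - vecMulVec (s k) (y k)) * (Smat s k * L k * (Smat s k)ᵀ) *
            ((1 : Matrix (Fin n) (Fin n) ℝ) - vecMulVec (s k) (y k))ᵀ
          = Smat s (k+1) * (W * L k * Wᵀ) * (Smat s (k+1))ᵀ := by
        calc (1 - vecMulVec (s k) (y k)) * (Smat s k * L k * (Smat s k)ᵀ) *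
              ((1 : Matrix (Fin n) (Fin n) ℝ) - vecMulVec (s k) (y k))ᵀ
            = ((1 - vecMulVec (s k) (y k)) * Smat s k) * L k *
              ((1 - vecMulVec (s k) (y k)) * Smat s k)ᵀ := by
              simp only [transpose_mul, Matrix.mul_assoc]
          _ = (Smat s (k+1) * W) * L k * (Smat s (k+1) * W)ᵀ := by rw [hAS]
          _ = Smat s (k+1) * (W * L k * Wᵀ) * (Smat s (k+1))ᵀ := by
              simp only [transpose_mul, Matrix.mul_assoc]
      rw [hH k hk, ih.1, bfgsUpdate, hL k hk, htr, e1, ← aux_smat_emat (k := k) s]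
      simp only [Matrix.mul_add, Matrix.add_mul]
      rfl
  have hrkHS : ∀ k, m ≤ k → (H k).rank = (Smat s k).rank := fun k hk => by
    rw [(key k hk).1]; exact aux_rank_SLS _ (key k hk).2
  have hrkS : ∀ k, m ≤ k → (Smat s k).rank = (Smat s m).rank := by
    intro k hk
    induction k, hk using Nat.le_induction with
    | base => rfl
    | succ k hk ih =>
      rw [← ih]
      apply aux_rank_smat_succ
      obtain ⟨x, hx⟩ := hrange k hk
      rw [(key k hk).1] at hx
      exact ⟨(L k * (Smat s k)ᵀ) *ᵥ x, by
        rw [mulVec_mulVec, ← Matrix.mul_assoc]; exact hx⟩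
  have h1 : ∀ k, m ≤ k → (H k).rank = (H m).rank := fun k hk => by
    rw [hrkHS k hk, hrkS k hk, ← hrkHS m le_rfl]
  exact ⟨h1, hrkHS m le_rfl, ⟨fun h => h m le_rfl, fun h k hk => (h1 k hk).trans h⟩⟩
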